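/- Let q ∈ [10⁻¹⁵, 0.1] and set y = -log₂(-ln(1-q)). If k_opt is a positive integer minimizing k ↦ q·k / (1 - (1-q)^{2^k - 1}) over the positive integers, then k_opt ∈ {⌊y⌋, ⌊y⌋+1, ⌊y⌋+2, ⌊y⌋+3, ⌈y⌉+3}; in particular, the iterative search that starts at k = ⌊y⌋ and increases k until the objective stops decreasing terminates within five iterations. -/

import Mathlib

/-- Step lemma A: for `k ≥ 1` with `a·2^(k+1) ≤ 1` (where `a = -ln t`),
the MZRL objective strictly decreases from `k` to `k+1`
(stated in cross-multiplied form). -/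
lemma stepA (t : ℝ) (k : ℕ) (hk : 1 ≤ k) (ht9 : 0.9 ≤ t) (ht1 : t < 1)
    (hyp : (-Real.log t) * 2 ^ (k + 1) ≤ 1) :
    ((k:ℝ) + 1) * (1 - t ^ (2 ^ k - 1)) < (k:ℝ) * (1 - t ^ (2 ^ (k + 1) - 1)) := by
  have ht0 : (0:ℝ) < t := by linarith
  rcases Nat.lt_or_ge k 3 with h3 | h3
  · interval_cases k
    · norm_num
      nlinarith [mul_pos (show (0:ℝ) < 1 - t by linarith)
        (show (0:ℝ) < t^2 + t - 1 by nlinarith)]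
    · norm_num
      have hQ : (0:ℝ) < 2*t^6 + 2*t^5 + 2*t^4 + 2*t^3 - t^2 - t - 1 := by
        nlinarith [pow_le_pow_left₀ (show (0:ℝ) ≤ 0.9 by norm_num) ht9 3,
          pow_le_pow_left₀ (show (0:ℝ) ≤ 0.9 by norm_num) ht9 4,
          pow_le_pow_left₀ (show (0:ℝ) ≤ 0.9 by norm_num) ht9 5,
          pow_le_pow_left₀ (show (0:ℝ) ≤ 0.9 by norm_num) ht9 6,
          sq_nonneg t, ht9, ht1]
      nlinarith [mul_pos (show (0:ℝ) < 1 - t by linarith) hQ]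
  · set a := -Real.log t with ha_def
    have ha0 : 0 < a := by
      have := Real.log_neg ht0 ht1
      simp only [ha_def]; linarith
    set v := a * 2 ^ k with hv_def
    have hv0 : 0 < v := by positivity
    have hv : v ≤ 1/2 := by
      have h2 : a * 2 ^ (k+1) = 2 * v := by rw [hv_def, pow_succ]; ring
      linarith [hyp, h2.symm.trans_le hyp]
    set u := a * ((2:ℝ) ^ k - 1) with hu_def
    have huv : u = v - a := by rw [hu_def, hv_def]; ring
    have hcast : ((2^k - 1 : ℕ) : ℝ) = (2:ℝ)^k - 1 := by
      have : (1:ℕ) ≤ 2^k := Nat.one_le_two_pow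
      push_cast [this]; ring
    have hcast2 : ((2^(k+1) - 1 : ℕ) : ℝ) = (2:ℝ)^(k+1) - 1 := by
      have : (1:ℕ) ≤ 2^(k+1) := Nat.one_le_two_pow
      push_cast [this]; ring
    have hS : t ^ (2^k - 1) = Real.exp (-u) := by
      rw [← Real.exp_log ht0, ← Real.exp_nat_mul, hcast]
      congr 1
      rw [hu_def, ha_def]; ring
    have hW : t ^ (2^(k+1) - 1) = Real.exp (-u) * Real.exp (-v) := by
      rw [← Real.exp_add, ← Real.exp_log ht0, ← Real.exp_nat_mul, hcast2]
      congr 1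
      rw [hu_def, hv_def, ha_def, pow_succ]; ring
    rw [hS, hW]
    set S := Real.exp (-u) with hS_def
    set W := Real.exp (-v) with hW_def
    have hS_lb : 1 - u ≤ S := by
      have := Real.add_one_le_exp (-u); linarith
    have hW_ub : W * (1 + v) ≤ 1 := by
      have h1 := Real.add_one_le_exp v
      have h2 : W = (Real.exp v)⁻¹ := by rw [hW_def, Real.exp_neg]
      rw [h2, inv_mul_le_iff₀ (Real.exp_pos v)]
      linarith
    have hW0 : 0 < W := Real.exp_pos _
    have hW_lb : 2/3 * v ≤ 1 - W := by nlinarith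
    have hu_half : u ≤ 1/2 := by rw [huv]; linarith
    have hS_half : (1/2:ℝ) ≤ S := by linarith
    have hk3 : (3:ℝ) ≤ (k:ℝ) := by exact_mod_cast h3
    have key : v ≤ (k:ℝ) * (S * (1 - W)) := by
      calc v = 3 * ((1/2) * ((2/3) * v)) := by ring
        _ ≤ (k:ℝ) * (S * (1 - W)) := by gcongr <;> positivity
    have expand : (k:ℝ) * (1 - S * W) = (k:ℝ) * (1 - S) + (k:ℝ) * (S * (1 - W)) := by ring
    have hSu : 1 - S ≤ u := by
      have := Real.add_one_le_exp (-u); linarith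
    have huv2 : u < v := by rw [huv]; linarith
    linarith

/-- Step lemma B: for `j ≥ 1` with `a·2^j ≥ 8` (where `a = -ln t ≥ 10⁻¹⁵`),
the MZRL objective strictly increases from `j` to `j+1`
(stated in cross-multiplied form). -/
lemma stepB (t : ℝ) (j : ℕ) (hj : 1 ≤ j) (ht9 : 0.9 ≤ t) (ht1 : t < 1)
    (hyp : 8 ≤ (-Real.log t) * 2 ^ j) (haeps : 1e-15 ≤ -Real.log t) :
    (j:ℝ) * (1 - t ^ (2 ^ (j + 1) - 1)) < ((j:ℝ) + 1) * (1 - t ^ (2 ^ j - 1)) := by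
  have ht0 : (0:ℝ) < t := by linarith
  set a := -Real.log t with ha_def
  have ha0 : 0 < a := by linarith
  have ha_half : a ≤ 1/2 := by
    have h1 : Real.exp (-(1/2)) ≤ t := by
      have h2 := Real.add_one_le_exp (1/2 : ℝ)
      have h3 : Real.exp (-(1/2)) = (Real.exp (1/2))⁻¹ := by rw [Real.exp_neg]
      have h4 : (Real.exp (1/2 : ℝ))⁻¹ ≤ (3/2 : ℝ)⁻¹ := by
        apply inv_anti₀ <;> linarith
      rw [h3]; linarith
    have := (Real.le_log_iff_exp_le ht0).2 h1
    simp only [ha_def]; linarith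
  set v := a * 2 ^ j with hv_def
  set u := a * ((2:ℝ) ^ j - 1) with hu_def
  have huv : u = v - a := by rw [hu_def, hv_def]; ring
  have hu75 : 7.5 ≤ u := by rw [huv]; linarith
  have hcast : ((2^j - 1 : ℕ) : ℝ) = (2:ℝ)^j - 1 := by
    have : (1:ℕ) ≤ 2^j := Nat.one_le_two_pow
    push_cast [this]; ring
  have hcast2 : ((2^(j+1) - 1 : ℕ) : ℝ) = (2:ℝ)^(j+1) - 1 := by
    have : (1:ℕ) ≤ 2^(j+1) := Nat.one_le_two_pow
    push_cast [this]; ring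
  have hS : t ^ (2^j - 1) = Real.exp (-u) := by
    rw [← Real.exp_log ht0, ← Real.exp_nat_mul, hcast]
    congr 1; rw [hu_def, ha_def]; ring
  have hW : t ^ (2^(j+1) - 1) = Real.exp (-u) * Real.exp (-v) := by
    rw [← Real.exp_add, ← Real.exp_log ht0, ← Real.exp_nat_mul, hcast2]
    congr 1; rw [hu_def, hv_def, ha_def, pow_succ]; ring
  rw [hS, hW]
  set S := Real.exp (-u) with hS_def
  set W := Real.exp (-v) with hW_def
  have hkey : (j:ℝ) + 1 < Real.exp u := by
    rcases Nat.lt_or_ge j 60 with h60 | h60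
    · have hj60 : (j:ℝ) + 1 ≤ 60 := by
        have h59 : j ≤ 59 := by omega
        have : (j:ℝ) ≤ 59 := by exact_mod_cast h59
        linarith
      have h4 : Real.exp u = (Real.exp (u/4))^4 := by
        rw [← Real.exp_nat_mul]; congr 1; push_cast; ring
      have h5 : (2.875:ℝ) ≤ Real.exp (u/4) := by
        have := Real.add_one_le_exp (u/4); linarith
      have h6 : (2.875:ℝ)^4 ≤ (Real.exp (u/4))^4 :=
        pow_le_pow_left₀ (by norm_num) h5 4
      rw [h4]; nlinarith
    · set m := j - 60 with hm_def
      have hjm : j = m + 60 := by omega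
      have h2m : ((m:ℝ) + 1) ≤ (2:ℝ)^m := by
        have h : m < 2^m := Nat.lt_two_pow_self
        have h' : m + 1 ≤ 2^m := h
        exact_mod_cast h'
      have hpow : (2:ℝ)^j = 2^60 * 2^m := by rw [hjm]; ring
      have hja : (j:ℝ) = (m:ℝ) + 60 := by rw [hjm]; push_cast; ring
      have hm1 : (0:ℝ) ≤ (m:ℝ) + 1 := by positivity
      have hc : (1152:ℝ) ≤ 1e-15 * 2^60 := by norm_num
      have hv_lb : 1152 * ((m:ℝ)+1) ≤ v := by
        calc (1152:ℝ) * ((m:ℝ)+1) ≤ (1e-15 * 2^60) * ((m:ℝ)+1) :=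
              mul_le_mul_of_nonneg_right hc hm1
          _ ≤ (1e-15) * (2^60 * 2^m) := by
              have := mul_le_mul_of_nonneg_left h2m (show (0:ℝ) ≤ 2^60 by positivity)
              nlinarith
          _ ≤ a * (2^60 * 2^m) := mul_le_mul_of_nonneg_right haeps (by positivity)
          _ = a * 2^j := by rw [hpow]
          _ = v := hv_def.symm
      have hu_big : (j:ℝ) + 2 ≤ u := by
        rw [huv, hja]; linarith
      have := Real.add_one_le_exp u
      linarith
  have hS_small : ((j:ℝ) + 1) * S < 1 := by
    have hSe : S = (Real.exp u)⁻¹ := by rw [hS_def, Real.exp_neg]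
    have hpos := Real.exp_pos u
    rw [hSe, mul_inv_lt_iff₀ hpos]
    linarith
  have hW0 : 0 < W := Real.exp_pos _
  have hS0 : 0 < S := Real.exp_pos _
  have expand : ((j:ℝ)+1) * (1 - S) - (j:ℝ) * (1 - S * W) =
      1 - ((j:ℝ)+1) * S + (j:ℝ) * (S * W) := by ring
  have hnn : (0:ℝ) ≤ (j:ℝ) * (S * W) := by positivity
  linarith

/-- For `q ∈ [10⁻¹⁵, 0.1]` and `y = -log₂(-ln(1-q))`, any positive integer
`k_opt` minimizing `k ↦ qk/(1-(1-q)^{2^k-1})` over the positive integers lies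
in `{⌊y⌋, ⌊y⌋+1, ⌊y⌋+2, ⌊y⌋+3, ⌈y⌉+3}`. -/
theorem stmt_18 (q : ℝ) (hq : q ∈ Set.Icc (1e-15 : ℝ) 0.1)
    (kopt : ℕ) (hkpos : 1 ≤ kopt)
    (hkopt : ∀ k : ℕ, 1 ≤ k →
      q * (kopt : ℝ) / (1 - (1 - q) ^ (2 ^ kopt - 1)) ≤
        q * (k : ℝ) / (1 - (1 - q) ^ (2 ^ k - 1))) :
    (kopt : ℤ) = ⌊-Real.logb 2 (-Real.log (1 - q))⌋ ∨
    (kopt : ℤ) = ⌊-Real.logb 2 (-Real.log (1 - q))⌋ + 1 ∨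
    (kopt : ℤ) = ⌊-Real.logb 2 (-Real.log (1 - q))⌋ + 2 ∨
    (kopt : ℤ) = ⌊-Real.logb 2 (-Real.log (1 - q))⌋ + 3 ∨
    (kopt : ℤ) = ⌈-Real.logb 2 (-Real.log (1 - q))⌉ + 3 := by
  obtain ⟨hq1, hq2⟩ := hq
  have hq0 : (0:ℝ) < q := by linarith
  set t := 1 - q with ht_def
  have ht9 : (0.9:ℝ) ≤ t := by rw [ht_def]; linarith
  have ht1 : t < 1 := by rw [ht_def]; linarith
  have ht0 : (0:ℝ) < t := by linarith
  set a := -Real.log t with ha_def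
  have ha0 : 0 < a := by
    have := Real.log_neg ht0 ht1
    simp only [ha_def]; linarith
  have haq : q ≤ a := by
    have := Real.log_le_sub_one_of_pos ht0
    simp only [ha_def, ht_def] at *; linarith
  have haeps : (1e-15:ℝ) ≤ a := le_trans hq1 haq
  set y := -Real.logb 2 a with hy_def
  have hD : ∀ m : ℕ, 1 ≤ m → 0 < 1 - t ^ (2^m - 1) := by
    intro m hm
    have hne : 2^m - 1 ≠ 0 := by
      have : (1:ℕ) < 2^m := Nat.one_lt_two_pow (by omega)
      omega
    have := pow_lt_one₀ (le_of_lt ht0) ht1 hne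
    linarith
  have hlow : ⌊y⌋ ≤ (kopt:ℤ) := by
    by_contra hcon
    push_neg at hcon
    have h1 : ((kopt:ℤ) + 1 : ℤ) ≤ ⌊y⌋ := by omega
    have h2 : ((kopt:ℝ) + 1) ≤ y := by
      have := Int.le_floor.mp h1
      push_cast at this; linarith
    have h3 : Real.logb 2 a ≤ -((kopt:ℝ) + 1) := by
      rw [hy_def] at h2; linarith
    have h4 : a ≤ (2:ℝ) ^ (-(((kopt+1:ℕ)):ℝ)) := by
      have := (Real.logb_le_iff_le_rpow (one_lt_two) ha0).mp h3
      convert this using 2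
      push_cast; ring
    have h5 : a ≤ ((2:ℝ) ^ (kopt+1:ℕ))⁻¹ := by
      rwa [Real.rpow_neg (by norm_num), Real.rpow_natCast] at h4
    have hp : (0:ℝ) < (2:ℝ)^(kopt+1) := by positivity
    have hA : a * 2 ^ (kopt + 1) ≤ 1 := by
      calc a * 2^(kopt+1) ≤ ((2:ℝ)^(kopt+1))⁻¹ * 2^(kopt+1) :=
            mul_le_mul_of_nonneg_right h5 (le_of_lt hp)
        _ = 1 := inv_mul_cancel₀ (ne_of_gt hp)
    have hstep := stepA t kopt hkpos ht9 ht1 (by rw [← ha_def]; exact hA)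
    have hcmp := hkopt (kopt+1) (by omega)
    rw [div_le_div_iff₀ (hD kopt hkpos) (hD (kopt+1) (by omega))] at hcmp
    push_cast at hcmp
    nlinarith [hstep, hcmp, hq0]
  have hy1 : (1:ℝ) ≤ y := by
    have ha_half : a ≤ 1/2 := by
      have h1 : Real.exp (-(1/2)) ≤ t := by
        have h2 := Real.add_one_le_exp (1/2 : ℝ)
        have h3 : Real.exp (-(1/2)) = (Real.exp (1/2))⁻¹ := by rw [Real.exp_neg]
        have h4 : (Real.exp (1/2 : ℝ))⁻¹ ≤ (3/2 : ℝ)⁻¹ := by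
          apply inv_anti₀ <;> linarith
        rw [h3]; linarith
      have := (Real.le_log_iff_exp_le ht0).2 h1
      simp only [ha_def]; linarith
    have hmono : Real.logb 2 a ≤ Real.logb 2 (1/2) :=
      Real.logb_le_logb_of_le one_lt_two ha0 ha_half
    have hhalf : Real.logb 2 (1/2 : ℝ) = -1 := by
      rw [one_div, Real.logb_inv]
      simp
    rw [hy_def]; rw [hhalf] at hmono; linarith
  have hceil1 : (1:ℤ) ≤ ⌈y⌉ := by
    by_contra hcc
    push_neg at hcc
    have h0 : (⌈y⌉:ℝ) ≤ 0 := by exact_mod_cast (by omega : ⌈y⌉ ≤ 0)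
    linarith [Int.le_ceil y]
  have hhigh : (kopt:ℤ) ≤ ⌈y⌉ + 3 := by
    by_contra hcon
    push_neg at hcon
    have hk5 : (5:ℤ) ≤ (kopt:ℤ) := by omega
    have hk5' : 5 ≤ kopt := by exact_mod_cast hk5
    set j := kopt - 1 with hj_def
    have hjk : kopt = j + 1 := by omega
    have hj1 : 1 ≤ j := by omega
    have hjy : y + 3 ≤ (j:ℝ) := by
      have hz : (⌈y⌉ + 3 : ℤ) ≤ (j:ℤ) := by omega
      have hz' : ((⌈y⌉:ℝ) + 3) ≤ (j:ℝ) := by exact_mod_cast hz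
      linarith [Int.le_ceil y]
    have h3 : (3:ℝ) - (j:ℝ) ≤ Real.logb 2 a := by
      rw [hy_def] at hjy; linarith
    have h4 : (2:ℝ) ^ ((3:ℝ) - (j:ℝ)) ≤ a :=
      (Real.le_logb_iff_rpow_le one_lt_two ha0).mp h3
    have h5 : (8:ℝ) / 2^j ≤ a := by
      rw [Real.rpow_sub (by norm_num : (0:ℝ) < 2), Real.rpow_natCast] at h4
      have h8 : (2:ℝ) ^ (3:ℝ) = 8 := by
        rw [show (3:ℝ) = ((3:ℕ):ℝ) by norm_num, Real.rpow_natCast]; norm_num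
      rwa [h8] at h4
    have hp : (0:ℝ) < (2:ℝ)^j := by positivity
    have hB : (8:ℝ) ≤ a * 2^j := by
      rw [div_le_iff₀ hp] at h5; linarith
    have hstep := stepB t j hj1 ht9 ht1 (by rw [← ha_def]; exact hB)
      (by rw [← ha_def]; exact haeps)
    have hcmp := hkopt j hj1
    rw [div_le_div_iff₀ (hD kopt hkpos) (hD j hj1), hjk] at hcmp
    push_cast at hcmp
    nlinarith [hstep, hcmp, hq0]
  have hcf := Int.ceil_le_floor_add_one y
  have hfc := Int.floor_le_ceil y
  omega
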